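/- Let H_W be the quasi-shuffle Hopf algebra of words over ℂ with letters a_r (r = 1,...,R), let σ be an infinitesimal character with σ(a_i) = c_i and φ = exp_⋆(Lσ) : H_W → ℂ[L]. Let w = a_{i_1} ⧢_Θ a_{i_2} ⧢_Θ ··· ⧢_Θ a_{i_n} be the quasi-shuffle product of n letters and B_+^{a_r} the operator prepending the letter a_r to each word. Then the coefficient of L^{n+1} in φ(B_+^{a_r}(w)) equals 1/(n+1) times the coefficient of L^{n+1} in φ(a_r ⧢_Θ a_{i_1} ⧢_Θ ··· ⧢_Θ a_{i_n}); explicitly, [L^{n+1}] φ(B_+^{a_r}(w)) = c_r c_{i_1} ··· c_{i_n} / (n+1). -/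

import Mathlib

open scoped TensorProduct
noncomputable section

variable {Ω : Type*}

/-- The free `ℂ`-vector space on words over the alphabet `Ω`. -/
abbrev HW (Ω : Type*) := List Ω →₀ ℂ

/-- Quasi-shuffle product of two words. -/
def qshW (Θ : Ω → Ω → Ω) : List Ω → List Ω → HW Ω
  | [], v => Finsupp.single v 1
  | u, [] => Finsupp.single u 1
  | a :: u, b :: v =>
      Finsupp.mapDomain (a :: ·) (qshW Θ u (b :: v)) +
      Finsupp.mapDomain (b :: ·) (qshW Θ (a :: u) v) +
      Finsupp.mapDomain (Θ a b :: ·) (qshW Θ u v)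
  termination_by u v => u.length + v.length

/-- Bilinear extension of the quasi-shuffle product. -/
def qshL (Θ : Ω → Ω → Ω) : HW Ω →ₗ[ℂ] HW Ω →ₗ[ℂ] HW Ω :=
  Finsupp.lift (HW Ω →ₗ[ℂ] HW Ω) ℂ (List Ω) fun u =>
    Finsupp.lift (HW Ω) ℂ (List Ω) fun v => qshW Θ u v

/-- Deconcatenation coproduct `Δ(w) = Σ_{uv = w} v ⊗ u`. -/
def deconcat : HW Ω →ₗ[ℂ] HW Ω ⊗[ℂ] HW Ω :=
  Finsupp.lift (HW Ω ⊗[ℂ] HW Ω) ℂ (List Ω) fun w =>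
    ∑ i ∈ Finset.range (w.length + 1),
      Finsupp.single (w.drop i) (1 : ℂ) ⊗ₜ[ℂ] Finsupp.single (w.take i) (1 : ℂ)

/-- The counit `δ_∅`: indicator of the empty word. -/
def counitW : HW Ω →ₗ[ℂ] ℂ :=
  Finsupp.lift ℂ ℂ (List Ω) fun w => match w with | [] => 1 | _ => 0

/-- The convolution product on `Hom(H_W, ℂ)`. -/
def convC (f g : HW Ω →ₗ[ℂ] ℂ) : HW Ω →ₗ[ℂ] ℂ :=
  LinearMap.mul' ℂ ℂ ∘ₗ TensorProduct.map f g ∘ₗ deconcat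

/-- Convolution powers `σ^{⋆k}` with `σ^{⋆0} = 1ε`;  the Feynman rules
`φ = exp_⋆(Lσ)` have `[L^k] φ = σ^{⋆k}/k!`. -/
def convCPow (σ : HW Ω →ₗ[ℂ] ℂ) : ℕ → (HW Ω →ₗ[ℂ] ℂ)
  | 0 => counitW
  | n + 1 => convC σ (convCPow σ n)

/-- The iterated quasi-shuffle product `a_{i_1} ⧢_Θ ⋯ ⧢_Θ a_{i_n}`. -/
def qprod (Θ : Ω → Ω → Ω) (l : List Ω) : HW Ω :=
  (l.map fun a => (Finsupp.single [a] 1 : HW Ω)).foldr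
    (fun x acc => qshL Θ x acc) (Finsupp.single [] 1)

/-- `B_+^a`: the linear map prepending the letter `a` to each word. -/
def Bplus (a : Ω) : HW Ω →ₗ[ℂ] HW Ω :=
  Finsupp.lmapDomain ℂ ℂ (a :: ·)

section Aux
variable {Ω : Type*}

lemma lift_single {M : Type*} [AddCommMonoid M] [Module ℂ M] (f : List Ω → M)
    (u : List Ω) (b : ℂ) :
    Finsupp.lift M ℂ (List Ω) f (Finsupp.single u b) = b • f u := by
  simp [Finsupp.lift_apply, Finsupp.sum_single_index]

lemma qshW_nil_left (Θ : Ω → Ω → Ω) (v : List Ω) : qshW Θ [] v = Finsupp.single v 1 := by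
  cases v <;> rw [qshW]

lemma qshW_cons_nil (Θ : Ω → Ω → Ω) (a : Ω) (u : List Ω) :
    qshW Θ (a :: u) [] = Finsupp.single (a :: u) 1 := by
  rw [qshW]; simp

lemma qshW_cons_cons (Θ : Ω → Ω → Ω) (a b : Ω) (u v : List Ω) :
    qshW Θ (a :: u) (b :: v) =
      Finsupp.mapDomain (a :: ·) (qshW Θ u (b :: v)) +
      Finsupp.mapDomain (b :: ·) (qshW Θ (a :: u) v) +
      Finsupp.mapDomain (Θ a b :: ·) (qshW Θ u v) := by rw [qshW]

/-- The leading-coefficient functional: picks words of length `k` and takes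
the product of `c` over the letters. -/
def P (c : Ω → ℂ) (k : ℕ) : HW Ω →ₗ[ℂ] ℂ :=
  Finsupp.lift ℂ ℂ (List Ω) fun u => if u.length = k then (u.map c).prod else 0

lemma P_single (c : Ω → ℂ) (k : ℕ) (u : List Ω) (b : ℂ) :
    P c k (Finsupp.single u b) = b * if u.length = k then (u.map c).prod else 0 := by
  simp [P, lift_single]

lemma P_mapDomain (c : Ω → ℂ) (a : Ω) (k : ℕ) (x : HW Ω) :
    P c (k + 1) (Finsupp.mapDomain (a :: ·) x) = c a * P c k x := by
  induction x using Finsupp.induction_linear with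
  | zero => simp
  | add f g hf hg => rw [Finsupp.mapDomain_add, map_add, hf, hg, map_add]; ring
  | single u b =>
      rw [Finsupp.mapDomain_single, P_single, P_single]
      simp only [List.length_cons, add_left_inj, List.map_cons, List.prod_cons]
      split_ifs <;> ring

lemma P_vanish (c : Ω → ℂ) (Θ : Ω → Ω → Ω) :
    ∀ u v : List Ω, ∀ k : ℕ, u.length + v.length < k → P c k (qshW Θ u v) = 0 := by
  intro u v
  induction u, v using qshW.induct with
  | case1 v =>
      intro k hk
      rw [qshW_nil_left, P_single]
      simp only [List.length_nil, Nat.zero_add] at hk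
      rw [if_neg (by omega)]; ring
  | case2 u hu =>
      intro k hk
      rcases u with _ | ⟨a, u⟩
      · rw [qshW_nil_left, P_single, if_neg (by simp at hk ⊢; omega)]; ring
      · rw [qshW_cons_nil, P_single, if_neg (by simp at hk ⊢; omega)]; ring
  | case3 a u b v ih1 ih2 ih3 =>
      intro k hk
      simp only [List.length_cons] at hk
      obtain ⟨m, rfl⟩ : ∃ m, k = m + 1 := ⟨k - 1, by omega⟩
      rw [qshW_cons_cons, map_add, map_add, P_mapDomain, P_mapDomain, P_mapDomain,
        ih1 m (by simp; omega), ih2 m (by simp; omega), ih3 m (by omega)]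
      ring

lemma P_top (c : Ω → ℂ) (Θ : Ω → Ω → Ω) :
    ∀ u v : List Ω,
      P c (u.length + v.length) (qshW Θ u v) =
        ((u.length + v.length).choose u.length : ℂ) * (u.map c).prod * (v.map c).prod := by
  intro u v
  induction u, v using qshW.induct with
  | case1 v => rw [qshW_nil_left, P_single]; simp
  | case2 u hu =>
      rcases u with _ | ⟨a, u⟩
      · rw [qshW_nil_left, P_single]; simp
      · rw [qshW_cons_nil, P_single]; simp
  | case3 a u b v ih1 ih2 ih3 =>
      rw [qshW_cons_cons, map_add, map_add]
      have h1 : (a :: u).length + (b :: v).length = (u.length + (b :: v).length) + 1 := by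
        simp; omega
      have h2 : (a :: u).length + (b :: v).length = ((a :: u).length + v.length) + 1 := by
        simp; omega
      have h3 : (a :: u).length + (b :: v).length = (u.length + v.length + 1) + 1 := by
        simp; omega
      rw [h1, P_mapDomain, ← h1, h2, P_mapDomain, ← h2, h3, P_mapDomain,
        P_vanish c Θ u v _ (by omega), ih1, ih2]
      simp only [List.length_cons, List.map_cons, List.prod_cons]
      have hnat : (u.length + v.length + 1 + 1).choose (u.length + 1) =
          (u.length + (v.length + 1)).choose u.length +
          (u.length + 1 + v.length).choose (u.length + 1) := by
        rw [Nat.choose_succ_succ]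
        congr 2 <;> omega
      rw [hnat]; push_cast; ring

lemma qshW_support (Θ : Ω → Ω → Ω) :
    ∀ u v : List Ω, ∀ w ∈ (qshW Θ u v).support, w.length ≤ u.length + v.length := by
  intro u v
  induction u, v using qshW.induct with
  | case1 v =>
      intro w hw
      rw [qshW_nil_left] at hw
      have := Finsupp.support_single_subset hw
      simp only [Finset.mem_singleton] at this
      simp [this]
  | case2 u hu =>
      intro w hw
      rcases u with _ | ⟨a, u⟩
      · rw [qshW_nil_left] at hw
        have := Finsupp.support_single_subset hw
        simp only [Finset.mem_singleton] at this
        simp [this]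
      · rw [qshW_cons_nil] at hw
        have := Finsupp.support_single_subset hw
        simp only [Finset.mem_singleton] at this
        simp [this]
  | case3 a u b v ih1 ih2 ih3 =>
      classical
      intro w hw
      rw [qshW_cons_cons] at hw
      have h := Finsupp.support_add hw
      simp only [Finset.mem_union] at h
      have key : ∀ (x : Ω) (y : HW Ω) (m : ℕ),
          (∀ w' ∈ y.support, w'.length ≤ m) →
          w ∈ (Finsupp.mapDomain (x :: ·) y).support → w.length ≤ m + 1 := by
        intro x y m hy hw'
        obtain ⟨w', hmem, rfl⟩ := Finset.mem_image.mp (Finsupp.mapDomain_support hw')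
        simpa using Nat.add_le_add_right (hy w' hmem) 1
      rcases h with h | h
      · have h := Finsupp.support_add h
        simp only [Finset.mem_union] at h
        rcases h with h | h
        · have := key a _ _ ih1 h
          simp at this ⊢; omega
        · have := key b _ _ ih2 h
          simp at this ⊢; omega
      · have := key (Θ a b) _ _ ih3 h
        simp at this ⊢; omega

lemma qshL_single_apply (Θ : Ω → Ω → Ω) (u : List Ω) (y : HW Ω) :
    qshL Θ (Finsupp.single u 1) y = y.sum fun v cv => cv • qshW Θ u v := by
  simp [qshL, lift_single, Finsupp.lift_apply]

lemma qprod_cons (Θ : Ω → Ω → Ω) (a : Ω) (l : List Ω) :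
    qprod Θ (a :: l) = qshL Θ (Finsupp.single [a] 1) (qprod Θ l) := rfl

lemma qprod_support (Θ : Ω → Ω → Ω) :
    ∀ l : List Ω, ∀ w ∈ (qprod Θ l).support, w.length ≤ l.length := by
  intro l
  induction l with
  | nil =>
      intro w hw
      have := Finsupp.support_single_subset hw
      simp only [Finset.mem_singleton] at this
      simp [qprod, this]
  | cons a l ih =>
      classical
      intro w hw
      rw [qprod_cons, qshL_single_apply] at hw
      have h := Finsupp.support_sum hw
      rw [Finset.mem_biUnion] at h
      obtain ⟨v, hv, hw2⟩ := h
      have hw3 := Finsupp.support_smul hw2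
      have h1 := qshW_support Θ [a] v w hw3
      have h2 := ih v hv
      simp only [List.length_singleton, List.length_cons, List.length_nil] at h1 ⊢
      omega

lemma counitW_nil (b : ℂ) : counitW (Finsupp.single ([] : List Ω) b) = b := by
  simp [counitW, lift_single]

lemma counitW_cons (a : Ω) (u : List Ω) (b : ℂ) :
    counitW (Finsupp.single (a :: u) b) = 0 := by
  simp [counitW, lift_single]

lemma convC_single (f g : HW Ω →ₗ[ℂ] ℂ) (u : List Ω) :
    convC f g (Finsupp.single u 1) =
      ∑ i ∈ Finset.range (u.length + 1),
        f (Finsupp.single (u.drop i) 1) * g (Finsupp.single (u.take i) 1) := by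
  simp [convC, deconcat, lift_single, map_sum]

lemma sigma_pow_single (σ : HW Ω →ₗ[ℂ] ℂ) (c : Ω → ℂ)
    (hempty : σ (Finsupp.single ([] : List Ω) 1) = 0)
    (hletter : ∀ a : Ω, σ (Finsupp.single [a] 1) = c a) :
    ∀ (k : ℕ) (u : List Ω), u.length ≤ k →
      convCPow σ k (Finsupp.single u 1) =
        if u.length = k then (u.map c).prod else 0 := by
  intro k
  induction k with
  | zero =>
      intro u hu
      have : u = [] := List.length_eq_zero_iff.mp (Nat.le_zero.mp hu)
      subst this
      rw [show convCPow σ 0 = (counitW : HW Ω →ₗ[ℂ] ℂ) from rfl, counitW_nil]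
      simp
  | succ k ih =>
      intro u hu
      rw [show convCPow σ (k+1) = convC σ (convCPow σ k) from rfl, convC_single]
      by_cases hlen : u.length = k + 1
      · rw [if_pos hlen]
        have hdrop : (u.drop k).length = 1 := by rw [List.length_drop]; omega
        obtain ⟨z, hz⟩ := List.length_eq_one_iff.mp hdrop
        rw [Finset.sum_eq_single_of_mem k (Finset.mem_range.mpr (by omega))]
        · rw [hz, hletter, ih (u.take k) (by rw [List.length_take]; omega),
            if_pos (by rw [List.length_take]; omega)]
          have hu2 : u = u.take k ++ [z] := by rw [← hz, List.take_append_drop]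
          calc c z * (List.map c (u.take k)).prod
              = (List.map c (u.take k ++ [z])).prod := by
                rw [List.map_append, List.prod_append]; simp [mul_comm]
            _ = (List.map c u).prod := by rw [← hu2]
        · intro i hi hne
          rcases Nat.lt_or_ge i k with h | h
          · rw [ih (u.take i) (by rw [List.length_take]; omega),
              if_neg (by rw [List.length_take]; omega), mul_zero]
          · have : i = k + 1 := by
              have := Finset.mem_range.mp hi; omega
            subst this
            have : u.drop (k+1) = [] := List.drop_eq_nil_of_le (by omega)
            rw [this, hempty, zero_mul]
      · rw [if_neg hlen]
        apply Finset.sum_eq_zero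
        intro i hi
        have hi' : i ≤ u.length := by have := Finset.mem_range.mp hi; omega
        rcases Nat.lt_or_ge i k with h | h
        · rw [ih (u.take i) (by rw [List.length_take]; omega),
            if_neg (by rw [List.length_take]; omega), mul_zero]
        · have hik : i = k := by omega
          subst hik
          have : u.drop i = [] := List.drop_eq_nil_of_le (by omega)
          rw [this, hempty, zero_mul]

lemma pow_eq_P (σ : HW Ω →ₗ[ℂ] ℂ) (c : Ω → ℂ)
    (hempty : σ (Finsupp.single ([] : List Ω) 1) = 0)
    (hletter : ∀ a : Ω, σ (Finsupp.single [a] 1) = c a)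
    (k : ℕ) (x : HW Ω) (hx : ∀ w ∈ x.support, w.length ≤ k) :
    convCPow σ k x = P c k x := by
  conv_lhs => rw [← Finsupp.sum_single x, Finsupp.sum]
  conv_rhs => rw [← Finsupp.sum_single x, Finsupp.sum]
  rw [map_sum, map_sum]
  refine Finset.sum_congr rfl fun w hw => ?_
  rw [← Finsupp.smul_single_one w (x w), map_smul, map_smul,
    sigma_pow_single σ c hempty hletter k w (hx w hw), P_single]
  simp [smul_eq_mul]

lemma P_apply (c : Ω → ℂ) (k : ℕ) (y : HW Ω) :
    P c k y = ∑ v ∈ y.support, y v * (if v.length = k then (v.map c).prod else 0) := by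
  simp [P, Finsupp.lift_apply, Finsupp.sum, smul_eq_mul]

lemma P_qshL_single (c : Ω → ℂ) (Θ : Ω → Ω → Ω) (a : Ω) (n : ℕ) (y : HW Ω)
    (hy : ∀ w ∈ y.support, w.length ≤ n) :
    P c (n + 1) (qshL Θ (Finsupp.single [a] 1) y) = ((n : ℂ) + 1) * c a * P c n y := by
  rw [qshL_single_apply, map_finsuppSum, Finsupp.sum, P_apply, Finset.mul_sum]
  refine Finset.sum_congr rfl fun v hv => ?_
  rw [map_smul, smul_eq_mul]
  rcases eq_or_lt_of_le (hy v hv) with h | h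
  · have htop := P_top c Θ [a] v
    simp only [List.length_singleton, List.map_cons, List.map_nil, List.prod_cons,
      List.prod_nil, mul_one] at htop
    rw [show (1 : ℕ) + v.length = n + 1 by omega] at htop
    rw [htop, if_pos h, Nat.choose_one_right]
    push_cast
    ring
  · rw [P_vanish c Θ [a] v (n + 1) (by simp; omega), if_neg (by omega)]
    ring

lemma P_qprod (c : Ω → ℂ) (Θ : Ω → Ω → Ω) :
    ∀ l : List Ω, P c l.length (qprod Θ l) = (l.length.factorial : ℂ) * (l.map c).prod := by
  intro l
  induction l with
  | nil => simp [qprod, P_single]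
  | cons a l ih =>
      rw [qprod_cons, show (a :: l).length = l.length + 1 from rfl,
        P_qshL_single c Θ a l.length (qprod Θ l) (qprod_support Θ l), ih,
        Nat.factorial_succ]
      simp only [List.map_cons, List.prod_cons]
      push_cast
      ring

end Aux
/-- **Proposition 11: the coefficient of `L^{n+1}` of `φ ∘ B_+`.**
Let `w = a_{i_1} ⧢_Θ ⋯ ⧢_Θ a_{i_n}` be the quasi-shuffle product of `n`
letters, `B_+^{a_r}` the operator prepending `a_r`, `σ` an infinitesimal
character with `σ(a) = c_a` on letters and `σ(∅) = 0`, and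
`φ = exp_⋆(Lσ)` (so that `[L^k] φ = σ^{⋆k}/k!`).  Then the coefficient of
`L^{n+1}` in `φ(B_+^{a_r}(w))` equals `1/(n+1)` times the coefficient of
`L^{n+1}` in `φ(a_r ⧢_Θ a_{i_1} ⧢_Θ ⋯ ⧢_Θ a_{i_n})`; explicitly it equals
`c_r·c_{i_1}⋯c_{i_n}/(n+1)`. -/
theorem Bplus_leading_log_coefficient
    (Ω : Type*) (Θ : Ω → Ω → Ω)
    (hcomm : ∀ a b : Ω, Θ a b = Θ b a)
    (hassoc : ∀ a b c : Ω, Θ (Θ a b) c = Θ a (Θ b c))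
    (σ : HW Ω →ₗ[ℂ] ℂ) (c : Ω → ℂ)
    (hinf : ∀ x y : HW Ω,
      σ (qshL Θ x y) = σ x * counitW y + counitW x * σ y)
    (hempty : σ (Finsupp.single ([] : List Ω) 1) = 0)
    (hletter : ∀ a : Ω, σ (Finsupp.single [a] 1) = c a)
    (ar : Ω) (l : List Ω) :
    -- `[L^{n+1}] φ(B_+^{a_r}(w)) = (1/(n+1)) · [L^{n+1}] φ(a_r ⧢_Θ w)` …
    ((l.length + 1).factorial : ℂ)⁻¹ *
        convCPow σ (l.length + 1) (Bplus ar (qprod Θ l)) =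
      ((l.length : ℂ) + 1)⁻¹ *
        (((l.length + 1).factorial : ℂ)⁻¹ *
          convCPow σ (l.length + 1) (qshL Θ (Finsupp.single [ar] 1) (qprod Θ l))) ∧
    -- … and explicitly it equals `c_r · c_{i_1} ⋯ c_{i_n} / (n + 1)`
    ((l.length + 1).factorial : ℂ)⁻¹ *
        convCPow σ (l.length + 1) (Bplus ar (qprod Θ l)) =
      (c ar * (l.map c).prod) / ((l.length : ℂ) + 1) := by
  classical
  have hF : (((l.length + 1).factorial : ℕ) : ℂ) ≠ 0 :=
    Nat.cast_ne_zero.mpr (Nat.factorial_ne_zero _)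
  have hn : ((l.length : ℂ) + 1) ≠ 0 := Nat.cast_add_one_ne_zero l.length
  have hBsup : ∀ w ∈ (Bplus ar (qprod Θ l)).support, w.length ≤ l.length + 1 := by
    intro w hw
    rw [Bplus, Finsupp.lmapDomain_apply] at hw
    obtain ⟨w', hmem, rfl⟩ := Finset.mem_image.mp (Finsupp.mapDomain_support hw)
    simpa using Nat.add_le_add_right (qprod_support Θ l w' hmem) 1
  have h1 : convCPow σ (l.length + 1) (Bplus ar (qprod Θ l)) =
      c ar * ((l.length.factorial : ℂ) * (l.map c).prod) := by
    rw [pow_eq_P σ c hempty hletter (l.length + 1) _ hBsup, Bplus,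
      Finsupp.lmapDomain_apply, P_mapDomain, P_qprod]
  have h2 : convCPow σ (l.length + 1) (qshL Θ (Finsupp.single [ar] 1) (qprod Θ l)) =
      (((l.length + 1).factorial : ℕ) : ℂ) * (c ar * (l.map c).prod) := by
    rw [← qprod_cons,
      pow_eq_P σ c hempty hletter (l.length + 1) _ (qprod_support Θ (ar :: l))]
    have := P_qprod c Θ (ar :: l)
    simp only [List.length_cons, List.map_cons, List.prod_cons] at this
    rw [this]
  constructor
  · rw [h1, h2]
    field_simp
    rw [Nat.factorial_succ]
    push_cast
    ring
  · rw [h1]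
    field_simp
    rw [Nat.factorial_succ]
    push_cast
    ring
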